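/- Let d ∈ ℕ, Φ = (φ₀,…,φ_d) ∈ ℝ^{d+1} and s ∈ {0,1}^d, with d₁ the Hamming weight of s and d₂ = d − d₁, and let P and Q be the (1,1) and (1,2) entries of the M-QSP unitary M_{Φ,s}. Then there exist complex coefficients c_{jk} and c̃_{jk}, indexed by integers j ∈ [−d₁, d₁] and k ∈ [−d₂, d₂], such that for all x₁, x₂ ∈ ℝ: P(x₁,x₂) = Σ_{j=−d₁}^{d₁} Σ_{k=−d₂}^{d₂} c_{jk} e^{ijx₁} e^{ikx₂} and Q(x₁,x₂) = Σ_{j=−d₁}^{d₁} Σ_{k=−d₂}^{d₂} c̃_{jk} e^{ijx₁} e^{ikx₂}. -/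

import Mathlib

/-!
STATEMENT 3 (M-QSP: Laurent polynomial form of the entries).
-/

open Complex Matrix
open scoped Matrix

noncomputable def Wgate (x : ℝ) : Matrix (Fin 2) (Fin 2) ℂ :=
  !![(Real.cos x : ℂ), (Real.sin x : ℂ) * Complex.I;
     (Real.sin x : ℂ) * Complex.I, (Real.cos x : ℂ)]

noncomputable def Zgate (φ : ℝ) : Matrix (Fin 2) (Fin 2) ℂ :=
  !![Complex.exp ((φ : ℂ) * Complex.I), 0;
     0, Complex.exp (-(φ : ℂ) * Complex.I)]

/-- The M-QSP unitary
`M_{Φ,s}(x₁,x₂) = Z(φ₀)·∏_{k=1}^d (W(x₁)^{s_k}·W(x₂)^{1-s_k}·Z(φ_k))`,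
where each `s k ∈ {0,1}`. -/
noncomputable def Mmqsp (d : ℕ) (Φ : Fin (d + 1) → ℝ) (s : Fin d → ℕ)
    (x₁ x₂ : ℝ) : Matrix (Fin 2) (Fin 2) ℂ :=
  Zgate (Φ 0) *
    (List.ofFn (fun k : Fin d =>
      Wgate x₁ ^ (s k) * Wgate x₂ ^ (1 - s k) * Zgate (Φ k.succ))).prod

open Finset

noncomputable def eF (p : ℤ × ℤ) (x₁ x₂ : ℝ) : ℂ :=
  Complex.exp (Complex.I * (p.1 : ℂ) * (x₁ : ℂ)) * Complex.exp (Complex.I * (p.2 : ℂ) * (x₂ : ℂ))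

noncomputable def Box (a b : ℕ) : Finset (ℤ × ℤ) :=
  Finset.Icc (-(a : ℤ)) (a : ℤ) ×ˢ Finset.Icc (-(b : ℤ)) (b : ℤ)

lemma mem_Box {a b : ℕ} {p : ℤ × ℤ} :
    p ∈ Box a b ↔ (-(a : ℤ) ≤ p.1 ∧ p.1 ≤ a) ∧ (-(b : ℤ) ≤ p.2 ∧ p.2 ≤ b) := by
  simp [Box, Finset.mem_product, Finset.mem_Icc]

def IsLau (a b : ℕ) (f : ℝ → ℝ → ℂ) : Prop :=
  ∃ c : ℤ × ℤ → ℂ, (∀ p ∉ Box a b, c p = 0) ∧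
    ∀ x₁ x₂ : ℝ, f x₁ x₂ = ∑ p ∈ Box a b, c p * eF p x₁ x₂

lemma eF_add (p q : ℤ × ℤ) (x₁ x₂ : ℝ) : eF (p + q) x₁ x₂ = eF p x₁ x₂ * eF q x₁ x₂ := by
  simp only [eF, Prod.fst_add, Prod.snd_add]
  push_cast
  rw [← Complex.exp_add, ← Complex.exp_add, ← Complex.exp_add, ← Complex.exp_add]
  ring_nf

lemma isLau_of {a b : ℕ} {f : ℝ → ℝ → ℂ} (c : ℤ × ℤ → ℂ)
    (h : ∀ x₁ x₂ : ℝ, f x₁ x₂ = ∑ p ∈ Box a b, c p * eF p x₁ x₂) : IsLau a b f := by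
  refine ⟨fun p => if p ∈ Box a b then c p else 0, fun p hp => if_neg hp, fun x₁ x₂ => ?_⟩
  rw [h]
  exact Finset.sum_congr rfl fun p hp => by simp only [if_pos hp]

lemma IsLau.mono {a b a' b' : ℕ} {f : ℝ → ℝ → ℂ} (h : IsLau a b f)
    (ha : a ≤ a') (hb : b ≤ b') : IsLau a' b' f := by
  obtain ⟨c, hc0, hc⟩ := h
  refine ⟨c, fun p hp => hc0 p fun hp' => hp ?_, fun x₁ x₂ => ?_⟩
  · rw [mem_Box] at hp' ⊢; omega
  · rw [hc]
    refine Finset.sum_subset (fun p hp => ?_) fun p _ hp => by rw [hc0 p hp, zero_mul]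
    rw [mem_Box] at hp ⊢; omega

lemma IsLau.add {a b : ℕ} {f g : ℝ → ℝ → ℂ} (hf : IsLau a b f) (hg : IsLau a b g) :
    IsLau a b (fun x₁ x₂ => f x₁ x₂ + g x₁ x₂) := by
  obtain ⟨c, _, hc⟩ := hf; obtain ⟨c', _, hc'⟩ := hg
  refine isLau_of (fun p => c p + c' p) fun x₁ x₂ => ?_
  rw [hc, hc', ← Finset.sum_add_distrib]
  exact Finset.sum_congr rfl fun p _ => by ring

lemma IsLau.mul {a b a' b' : ℕ} {f g : ℝ → ℝ → ℂ} (hf : IsLau a b f) (hg : IsLau a' b' g) :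
    IsLau (a + a') (b + b') (fun x₁ x₂ => f x₁ x₂ * g x₁ x₂) := by
  obtain ⟨c, hc0, hc⟩ := hf; obtain ⟨c', hc'0, hc'⟩ := hg
  refine isLau_of (fun r => ∑ p ∈ Box a b, c p * c' (r - p)) fun x₁ x₂ => ?_
  rw [hc, hc', Finset.sum_mul_sum]
  calc ∑ p ∈ Box a b, ∑ q ∈ Box a' b', (c p * eF p x₁ x₂) * (c' q * eF q x₁ x₂)
      = ∑ p ∈ Box a b, ∑ r ∈ Box (a + a') (b + b'), c p * c' (r - p) * eF r x₁ x₂ := by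
        refine Finset.sum_congr rfl fun p hp => ?_
        have key : ∀ q ∈ Box a' b',
            c p * eF p x₁ x₂ * (c' q * eF q x₁ x₂) = c p * c' ((p + q) - p) * eF (p + q) x₁ x₂ := by
          intro q _
          rw [eF_add, add_sub_cancel_left]; ring
        rw [Finset.sum_congr rfl key,
          ← Finset.sum_image (f := fun r => c p * c' (r - p) * eF r x₁ x₂)
            (g := fun q => p + q) (fun q _ q' _ h => by exact add_left_cancel h)]
        refine Finset.sum_subset (fun r hr => ?_) fun r _ hr => ?_
        · obtain ⟨q, hq, rfl⟩ := Finset.mem_image.mp hr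
          rw [mem_Box] at *
          simp only [Prod.fst_add, Prod.snd_add]
          omega
        · have : r - p ∉ Box a' b' := fun h => hr (Finset.mem_image.mpr ⟨r - p, h, by abel⟩)
          rw [hc'0 _ this]; ring
    _ = ∑ r ∈ Box (a + a') (b + b'), ∑ p ∈ Box a b, c p * c' (r - p) * eF r x₁ x₂ :=
        Finset.sum_comm
    _ = ∑ r ∈ Box (a + a') (b + b'), (∑ p ∈ Box a b, c p * c' (r - p)) * eF r x₁ x₂ :=
        Finset.sum_congr rfl fun r _ => (Finset.sum_mul ..).symm

lemma IsLau.const {a b : ℕ} (z : ℂ) : IsLau a b (fun _ _ => z) := by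
  refine IsLau.mono (a := 0) (b := 0) ?_ (Nat.zero_le _) (Nat.zero_le _)
  refine isLau_of (fun _ => z) fun x₁ x₂ => ?_
  have : Box 0 0 = {((0 : ℤ), (0 : ℤ))} := by decide
  simp [this, eF]


lemma exp_I_pos (x : ℝ) :
    Complex.exp (Complex.I * (x : ℂ)) = Complex.cos x + Complex.sin x * Complex.I := by
  rw [mul_comm, Complex.exp_mul_I]

lemma exp_I_neg (x : ℝ) :
    Complex.exp (-(Complex.I * (x : ℂ))) = Complex.cos x - Complex.sin x * Complex.I := by
  rw [show -(Complex.I * (x : ℂ)) = (-(x : ℂ)) * Complex.I by ring, Complex.exp_mul_I,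
    Complex.cos_neg, Complex.sin_neg]
  ring

lemma cos_isLau₁ : IsLau 1 0 (fun x₁ _ => (Real.cos x₁ : ℂ)) := by
  refine isLau_of (fun p => if p.1 = 0 then 0 else 1/2) fun x₁ x₂ => ?_
  have hB : Box 1 0 = {((-1 : ℤ), (0 : ℤ)), (0, 0), (1, 0)} := by decide
  rw [hB, Complex.ofReal_cos]
  simp only [Finset.sum_insert, Finset.mem_insert, Finset.mem_singleton, Finset.sum_singleton,
    Prod.mk.injEq, eF]
  norm_num
  rw [exp_I_pos, exp_I_neg]
  ring

lemma sinI_isLau₁ : IsLau 1 0 (fun x₁ _ => (Real.sin x₁ : ℂ) * Complex.I) := by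
  refine isLau_of (fun p => if p.1 = 1 then 1/2 else if p.1 = -1 then -(1/2) else 0)
    fun x₁ x₂ => ?_
  have hB : Box 1 0 = {((-1 : ℤ), (0 : ℤ)), (0, 0), (1, 0)} := by decide
  rw [hB, Complex.ofReal_sin]
  simp only [Finset.sum_insert, Finset.mem_insert, Finset.mem_singleton, Finset.sum_singleton,
    Prod.mk.injEq, eF]
  norm_num
  rw [exp_I_pos, exp_I_neg]
  ring

lemma cos_isLau₂ : IsLau 0 1 (fun _ x₂ => (Real.cos x₂ : ℂ)) := by
  refine isLau_of (fun p => if p.2 = 0 then 0 else 1/2) fun x₁ x₂ => ?_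
  have hB : Box 0 1 = {((0 : ℤ), (-1 : ℤ)), (0, 0), (0, 1)} := by decide
  rw [hB, Complex.ofReal_cos]
  simp only [Finset.sum_insert, Finset.mem_insert, Finset.mem_singleton, Finset.sum_singleton,
    Prod.mk.injEq, eF]
  norm_num
  rw [exp_I_pos, exp_I_neg]
  ring

lemma sinI_isLau₂ : IsLau 0 1 (fun _ x₂ => (Real.sin x₂ : ℂ) * Complex.I) := by
  refine isLau_of (fun p => if p.2 = 1 then 1/2 else if p.2 = -1 then -(1/2) else 0)
    fun x₁ x₂ => ?_
  have hB : Box 0 1 = {((0 : ℤ), (-1 : ℤ)), (0, 0), (0, 1)} := by decide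
  rw [hB, Complex.ofReal_sin]
  simp only [Finset.sum_insert, Finset.mem_insert, Finset.mem_singleton, Finset.sum_singleton,
    Prod.mk.injEq, eF]
  norm_num
  rw [exp_I_pos, exp_I_neg]
  ring

def MLau (a b : ℕ) (M : ℝ → ℝ → Matrix (Fin 2) (Fin 2) ℂ) : Prop :=
  ∀ i j, IsLau a b (fun x₁ x₂ => M x₁ x₂ i j)

lemma MLau.mul {a b a' b' : ℕ} {M N : ℝ → ℝ → Matrix (Fin 2) (Fin 2) ℂ}
    (hM : MLau a b M) (hN : MLau a' b' N) :
    MLau (a + a') (b + b') (fun x₁ x₂ => M x₁ x₂ * N x₁ x₂) := by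
  intro i j
  have h : (fun x₁ x₂ => (M x₁ x₂ * N x₁ x₂) i j) =
      fun x₁ x₂ => M x₁ x₂ i 0 * N x₁ x₂ 0 j + M x₁ x₂ i 1 * N x₁ x₂ 1 j := by
    funext x₁ x₂; rw [Matrix.mul_apply, Fin.sum_univ_two]
  rw [h]
  exact ((hM i 0).mul (hN 0 j)).add ((hM i 1).mul (hN 1 j))

lemma MLau.one : MLau 0 0 (fun _ _ => (1 : Matrix (Fin 2) (Fin 2) ℂ)) :=
  fun i j => IsLau.const _

lemma MLau.mono {a b a' b' : ℕ} {M : ℝ → ℝ → Matrix (Fin 2) (Fin 2) ℂ}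
    (h : MLau a b M) (ha : a ≤ a') (hb : b ≤ b') : MLau a' b' M :=
  fun i j => (h i j).mono ha hb

lemma MLau.Z (φ : ℝ) {a b : ℕ} : MLau a b (fun _ _ => Zgate φ) :=
  fun i j => IsLau.const _

lemma MLau.W₁ : MLau 1 0 (fun x₁ _ => Wgate x₁) := by
  intro i j
  fin_cases i <;> fin_cases j <;>
    simp only [Wgate, Matrix.cons_val', Matrix.cons_val_zero, Matrix.cons_val_one,
      Matrix.head_cons, Matrix.empty_val', Matrix.cons_val_fin_one, Matrix.head_fin_const]
  · exact cos_isLau₁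
  · exact sinI_isLau₁
  · exact sinI_isLau₁
  · exact cos_isLau₁

lemma MLau.W₂ : MLau 0 1 (fun _ x₂ => Wgate x₂) := by
  intro i j
  fin_cases i <;> fin_cases j <;>
    simp only [Wgate, Matrix.cons_val', Matrix.cons_val_zero, Matrix.cons_val_one,
      Matrix.head_cons, Matrix.empty_val', Matrix.cons_val_fin_one, Matrix.head_fin_const]
  · exact cos_isLau₂
  · exact sinI_isLau₂
  · exact sinI_isLau₂
  · exact cos_isLau₂

lemma MLau.W₁pow {n : ℕ} (hn : n ≤ 1) : MLau n 0 (fun x₁ _ => Wgate x₁ ^ n) := by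
  interval_cases n
  · simpa using MLau.one
  · simpa using MLau.W₁

lemma MLau.W₂pow {n : ℕ} (hn : n ≤ 1) : MLau 0 n (fun _ x₂ => Wgate x₂ ^ n) := by
  interval_cases n
  · simpa using MLau.one
  · simpa using MLau.W₂

lemma MLau.listProd (L : List ((ℝ → ℝ → Matrix (Fin 2) (Fin 2) ℂ) × ℕ × ℕ))
    (h : ∀ p ∈ L, MLau p.2.1 p.2.2 p.1) :
    MLau (L.map (fun p => p.2.1)).sum (L.map (fun p => p.2.2)).sum
      (fun x₁ x₂ => (L.map (fun p => p.1 x₁ x₂)).prod) := by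
  induction L with
  | nil => simpa using MLau.one
  | cons hd tl ih =>
    simp only [List.map_cons, List.prod_cons, List.sum_cons]
    exact (h hd List.mem_cons_self).mul (ih fun p hp => h p (List.mem_cons_of_mem _ hp))

lemma mqsp_MLau (d : ℕ) (Φ : Fin (d + 1) → ℝ) (s : Fin d → ℕ) (hs : ∀ k, s k ≤ 1)
    (d₁ d₂ : ℕ) (hd₁ : d₁ = ∑ k, s k) (hd₂ : d₂ = d - d₁) :
    MLau d₁ d₂ (fun x₁ x₂ => Mmqsp d Φ s x₁ x₂) := by
  set L : List ((ℝ → ℝ → Matrix (Fin 2) (Fin 2) ℂ) × ℕ × ℕ) :=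
    List.ofFn (fun k : Fin d =>
      ((fun x₁ x₂ => Wgate x₁ ^ s k * Wgate x₂ ^ (1 - s k) * Zgate (Φ k.succ)),
        s k, 1 - s k)) with hL
  have hmem : ∀ p ∈ L, MLau p.2.1 p.2.2 p.1 := by
    intro p hp
    rw [hL, List.mem_ofFn] at hp
    obtain ⟨k, rfl⟩ := hp
    have := ((MLau.W₁pow (hs k)).mul (MLau.W₂pow (n := 1 - s k) (by omega))).mul
      (MLau.Z (Φ k.succ) (a := 0) (b := 0))
    simpa using this
  have hprod := MLau.listProd L hmem
  have hsum1 : (L.map (fun p => p.2.1)).sum = d₁ := by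
    rw [hL, List.map_ofFn, List.sum_ofFn, hd₁]; rfl
  have hsum2 : (L.map (fun p => p.2.2)).sum = d₂ := by
    rw [hL, List.map_ofFn, List.sum_ofFn]
    have h1 : ∑ k : Fin d, ((1 - s k) + s k) = d := by
      simp [Nat.sub_add_cancel (hs _)]
    rw [Finset.sum_add_distrib] at h1
    simp only [Function.comp]
    omega
  rw [hsum1, hsum2] at hprod
  have := (MLau.Z (Φ 0) (a := 0) (b := 0)).mul hprod
  simp only [zero_add] at this
  convert this using 3 with x₁ x₂
  rw [Mmqsp, hL, List.map_ofFn]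
  rfl


theorem mqsp_laurent_form (d : ℕ) (Φ : Fin (d + 1) → ℝ)
    (s : Fin d → ℕ) (hs : ∀ k, s k ≤ 1)
    (d₁ d₂ : ℕ) (hd₁ : d₁ = ∑ k, s k) (hd₂ : d₂ = d - d₁) :
    ∃ c ctil : ℤ → ℤ → ℂ,
      (∀ x₁ x₂ : ℝ,
        Mmqsp d Φ s x₁ x₂ 0 0 =
          ∑ j ∈ Finset.Icc (-(d₁ : ℤ)) (d₁ : ℤ),
            ∑ k ∈ Finset.Icc (-(d₂ : ℤ)) (d₂ : ℤ),
              c j k * Complex.exp (Complex.I * (j : ℂ) * (x₁ : ℂ)) *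
                Complex.exp (Complex.I * (k : ℂ) * (x₂ : ℂ))) ∧
      (∀ x₁ x₂ : ℝ,
        Mmqsp d Φ s x₁ x₂ 0 1 =
          ∑ j ∈ Finset.Icc (-(d₁ : ℤ)) (d₁ : ℤ),
            ∑ k ∈ Finset.Icc (-(d₂ : ℤ)) (d₂ : ℤ),
              ctil j k * Complex.exp (Complex.I * (j : ℂ) * (x₁ : ℂ)) *
                Complex.exp (Complex.I * (k : ℂ) * (x₂ : ℂ))) := by
  have h := mqsp_MLau d Φ s hs d₁ d₂ hd₁ hd₂
  obtain ⟨c, _, hc⟩ := h 0 0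
  obtain ⟨c', _, hc'⟩ := h 0 1
  refine ⟨fun j k => c (j, k), fun j k => c' (j, k), fun x₁ x₂ => ?_, fun x₁ x₂ => ?_⟩
  · simp only at hc
    rw [hc x₁ x₂, Box, Finset.sum_product]
    exact Finset.sum_congr rfl fun j _ => Finset.sum_congr rfl fun k _ => by
      simp [eF, mul_assoc]
  · simp only at hc'
    rw [hc' x₁ x₂, Box, Finset.sum_product]
    exact Finset.sum_congr rfl fun j _ => Finset.sum_congr rfl fun k _ => by
      simp [eF, mul_assoc]
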